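/- Let A ∈ ℝ^{m×n}, B ∈ ℝ^{n×m}, and b ∈ ℝ^m. If the null space of B equals the null space of Aᵀ (as subspaces of ℝ^m), then for every x ∈ ℝ^n, BAx = Bb if and only if AᵀAx = Aᵀb; i.e., the unmatched system BAx = Bb has exactly the same solutions as the normal equations, so its solutions are precisely the least-squares solutions of Ax ≈ b. -/

import Mathlib

open Matrix

/-- The Euclidean norm `‖v‖₂ = sqrt (∑ i, v i ^ 2)` of a real vector. -/
noncomputable def enorm2 {ι : Type*} [Fintype ι] (v : ι → ℝ) : ℝ :=
  Real.sqrt (∑ i, v i ^ 2)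

lemma enorm_eq_sqrt_dot {ι : Type*} [Fintype ι] (v : ι → ℝ) :
    enorm2 v = Real.sqrt (v ⬝ᵥ v) := by
  simp [enorm2, dotProduct, sq]

lemma dot_nonneg' {ι : Type*} [Fintype ι] (v : ι → ℝ) : 0 ≤ v ⬝ᵥ v :=
  Finset.sum_nonneg fun i _ => mul_self_nonneg _

lemma dot_expand {ι : Type*} [Fintype ι] (v w : ι → ℝ) :
    (v + w) ⬝ᵥ (v + w) = v ⬝ᵥ v + 2 * (v ⬝ᵥ w) + w ⬝ᵥ w := by
  simp [add_dotProduct, dotProduct_add, dotProduct_comm w v]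
  ring

lemma normal_iff_min (m n : ℕ) (A : Matrix (Fin m) (Fin n) ℝ) (b : Fin m → ℝ)
    (x : Fin n → ℝ) :
    ((Aᵀ * A).mulVec x = Aᵀ.mulVec b) ↔
      ∀ x' : Fin n → ℝ, enorm2 (A.mulVec x - b) ≤ enorm2 (A.mulVec x' - b) := by
  have hres : ∀ v : Fin n → ℝ, Aᵀ.mulVec (A.mulVec v - b)
      = (Aᵀ * A).mulVec v - Aᵀ.mulVec b := by
    intro v; rw [Matrix.mulVec_sub, Matrix.mulVec_mulVec]
  have hdotA : ∀ (u : Fin n → ℝ) (w : Fin m → ℝ),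
      (A.mulVec u) ⬝ᵥ w = u ⬝ᵥ (Aᵀ.mulVec w) := by
    intro u w
    rw [Matrix.dotProduct_mulVec, Matrix.vecMul_transpose]
  constructor
  · intro h x'
    have hz : Aᵀ.mulVec (A.mulVec x - b) = 0 := by rw [hres, h, sub_self]
    rw [enorm_eq_sqrt_dot, enorm_eq_sqrt_dot]
    apply Real.sqrt_le_sqrt
    have hsplit : A.mulVec x' - b = (A.mulVec x - b) + A.mulVec (x' - x) := by
      rw [Matrix.mulVec_sub]; abel
    rw [hsplit, dot_expand]
    have horth : (A.mulVec x - b) ⬝ᵥ (A.mulVec (x' - x)) = 0 := by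
      rw [dotProduct_comm, hdotA, hz, dotProduct_zero]
    rw [horth]
    have := dot_nonneg' (A.mulVec (x' - x))
    linarith
  · intro hmin
    set r := A.mulVec x - b with hr
    set g := Aᵀ.mulVec r with hg
    have hgz : g = 0 := by
      by_contra hne
      have hG : (0:ℝ) < g ⬝ᵥ g := by
        rcases Function.ne_iff.mp hne with ⟨i, hi⟩
        have hpos : 0 < g i * g i := mul_self_pos.mpr hi
        have : g i * g i ≤ g ⬝ᵥ g := by
          apply Finset.single_le_sum (f := fun j => g j * g j)
            (fun j _ => mul_self_nonneg _) (Finset.mem_univ i)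
        linarith
      set C := (A.mulVec g) ⬝ᵥ (A.mulVec g) with hC
      have hCnn : 0 ≤ C := dot_nonneg' _
      set t := (g ⬝ᵥ g) / (C + 1) with ht
      have htpos : 0 < t := div_pos hG (by linarith)
      have hresid : A.mulVec (x - t • g) - b = r + (-t) • A.mulVec g := by
        rw [Matrix.mulVec_sub, Matrix.mulVec_smul, hr]
        module
      have hle := hmin (x - t • g)
      rw [enorm_eq_sqrt_dot, enorm_eq_sqrt_dot, hresid] at hle
      have hq : r ⬝ᵥ r ≤ (r + (-t) • A.mulVec g) ⬝ᵥ (r + (-t) • A.mulVec g) := by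
        exact (Real.sqrt_le_sqrt_iff (dot_nonneg' (r + (-t) • A.mulVec g))).mp hle
      have hexp : (r + (-t) • A.mulVec g) ⬝ᵥ (r + (-t) • A.mulVec g)
          = r ⬝ᵥ r - 2 * t * (g ⬝ᵥ g) + t^2 * C := by
        rw [dot_expand]
        have h1 : r ⬝ᵥ ((-t) • A.mulVec g) = -t * (g ⬝ᵥ g) := by
          rw [dotProduct_smul, dotProduct_comm, hdotA, ← hg, smul_eq_mul]
        have h2 : ((-t) • A.mulVec g) ⬝ᵥ ((-t) • A.mulVec g) = t^2 * C := by
          rw [smul_dotProduct, dotProduct_smul, ← hC, smul_eq_mul, smul_eq_mul]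
          ring
        rw [h1, h2]; ring
      rw [hexp] at hq
      have hkey : 2 * t * (g ⬝ᵥ g) ≤ t^2 * C := by linarith
      have : t * (C + 1) = g ⬝ᵥ g := by
        rw [ht]; exact div_mul_cancel₀ _ (ne_of_gt (by linarith))
      nlinarith [sq_nonneg t, htpos]
    rw [← sub_eq_zero, ← hres, ← hg, hgz]

/-- If the null space of `B` equals the null space of `Aᵀ`, then the unmatched
("not-normal") system `BAx = Bb` has exactly the same solutions as the normal
equations `AᵀAx = Aᵀb`; hence its solutions are precisely the least-squares
solutions of `Ax ≈ b`. -/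
theorem stmt_12 (m n : ℕ) (A : Matrix (Fin m) (Fin n) ℝ) (B : Matrix (Fin n) (Fin m) ℝ)
    (b : Fin m → ℝ)
    (hker : LinearMap.ker B.mulVecLin = LinearMap.ker (Aᵀ).mulVecLin) :
    ∀ x : Fin n → ℝ,
      (((B * A).mulVec x = B.mulVec b) ↔ ((Aᵀ * A).mulVec x = Aᵀ.mulVec b)) ∧
      (((B * A).mulVec x = B.mulVec b) ↔
        ∀ x' : Fin n → ℝ, enorm2 (A.mulVec x - b) ≤ enorm2 (A.mulVec x' - b)) := by
  intro x
  have hmem : ∀ v : Fin m → ℝ, B.mulVec v = 0 ↔ Aᵀ.mulVec v = 0 := by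
    intro v
    constructor <;> intro h
    · have : v ∈ LinearMap.ker B.mulVecLin := by simpa only [LinearMap.mem_ker, Matrix.mulVecLin_apply] using h
      rw [hker] at this
      simpa only [LinearMap.mem_ker, Matrix.mulVecLin_apply] using this
    · have : v ∈ LinearMap.ker (Aᵀ).mulVecLin := by simpa only [LinearMap.mem_ker, Matrix.mulVecLin_apply] using h
      rw [← hker] at this
      simpa only [LinearMap.mem_ker, Matrix.mulVecLin_apply] using this
  have h1 : ((B * A).mulVec x = B.mulVec b) ↔ ((Aᵀ * A).mulVec x = Aᵀ.mulVec b) := by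
    have e1 : ∀ (C : Matrix (Fin n) (Fin m) ℝ),
        ((C * A).mulVec x = C.mulVec b) ↔ C.mulVec (A.mulVec x - b) = 0 := by
      intro C
      rw [Matrix.mulVec_sub, Matrix.mulVec_mulVec, sub_eq_zero]
    rw [e1, e1, hmem]
  exact ⟨h1, h1.trans (normal_iff_min m n A b x)⟩
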